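/- Let (Ω, F, P) be a probability space with a filtration (F_t)_{t∈ℕ}, and let (X_t)_{t∈ℕ} be an adapted, integrable process taking values in the positive integers with X_0 ≤ n almost surely, for some real n ≥ 1. Let δ ∈ (0,1). Assume that for every t: (i) almost everywhere on the event {X_t = 1} one has X_{t+1} = 1, and (ii) almost everywhere on the event {X_t ≥ 2} one has E[X_{t+1} | F_t] ≤ δ·X_t. Then for every t ∈ ℕ, P(X_t ≥ 2) ≤ δ^t · n. -/

import Mathlib

open MeasureTheory

/-- Multiplicative-drift tail bound. Let `(X_t)` be an adapted, integrable
process on a filtered probability space, taking values in the positive integers, with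
`X_0 ≤ n` a.s. (`n ≥ 1`) and `δ ∈ (0,1)`. If `1` is an absorbing state and
`E[X_{t+1} | F_t] ≤ δ·X_t` a.e. on `{X_t ≥ 2}`, then `P(X_t ≥ 2) ≤ δ^t · n` for all `t`. -/
theorem stmt2 {Ω : Type*} {m : MeasurableSpace Ω} {μ : Measure Ω} [IsProbabilityMeasure μ]
    (ℱ : Filtration ℕ m) (X : ℕ → Ω → ℝ)
    (hadapted : Adapted ℱ X)
    (hint : ∀ t, Integrable (X t) μ)
    (hposint : ∀ t, ∀ᵐ ω ∂μ, ∃ k : ℕ, 1 ≤ k ∧ X t ω = (k : ℝ))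
    (n : ℝ) (hn : 1 ≤ n)
    (h0 : ∀ᵐ ω ∂μ, X 0 ω ≤ n)
    (δ : ℝ) (hδ0 : 0 < δ) (hδ1 : δ < 1)
    (habs : ∀ t, ∀ᵐ ω ∂μ, X t ω = 1 → X (t + 1) ω = 1)
    (hdrift : ∀ t, ∀ᵐ ω ∂μ, 2 ≤ X t ω → (μ[X (t + 1) | ℱ t]) ω ≤ δ * X t ω) :
    ∀ t, μ {ω | 2 ≤ X t ω} ≤ ENNReal.ofReal (δ ^ t * n) := by
  have key : ∀ t, ∫ ω, X (t+1) ω ∂μ - 1 ≤ δ * (∫ ω, X t ω ∂μ - 1) := by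
    intro t
    set g := μ[X (t+1)|ℱ t] with hg
    have hA : MeasurableSet[ℱ t] {ω | X t ω = 1} :=
      (hadapted t) (measurableSet_singleton (1:ℝ))
    have habs' : ∀ᵐ ω ∂μ, X t ω = 1 → g ω = 1 := by
      set A := {ω | X t ω = 1} with hAdef
      have h1 : A.indicator (X (t+1)) =ᵐ[μ] A.indicator (fun _ => (1:ℝ)) := by
        filter_upwards [habs t] with ω h
        by_cases hω : ω ∈ A
        · simp only [Set.indicator_of_mem hω]
          exact h hω
        · simp [Set.indicator_of_notMem hω]
      have h2 : A.indicator g =ᵐ[μ] A.indicator (fun _ => (1:ℝ)) := by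
        calc A.indicator g
            =ᵐ[μ] μ[A.indicator (X (t+1))|ℱ t] :=
              (condExp_indicator (hint (t+1)) hA).symm
          _ =ᵐ[μ] μ[A.indicator (fun _ => (1:ℝ))|ℱ t] := condExp_congr_ae h1
          _ =ᵐ[μ] A.indicator (μ[(fun _ => (1:ℝ))|ℱ t]) :=
              condExp_indicator (integrable_const 1) hA
          _ =ᵐ[μ] A.indicator (fun _ => (1:ℝ)) := by
              rw [condExp_const (ℱ.le t)]
      filter_upwards [h2] with ω hω hx1
      have hωA : ω ∈ A := hx1
      simpa [Set.indicator_of_mem hωA] using hω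
    have hbound : ∀ᵐ ω ∂μ, g ω ≤ δ * (X t ω - 1) + 1 := by
      filter_upwards [habs', hdrift t, hposint t] with ω h1 h2 h3
      obtain ⟨k, hk, hkx⟩ := h3
      rcases eq_or_lt_of_le hk with h | h
      · have hx1 : X t ω = 1 := by rw [hkx, ← h]; norm_num
        rw [h1 hx1, hx1]; norm_num
      · have hk2 : (2:ℕ) ≤ k := h
        have hx2 : (2:ℝ) ≤ X t ω := by rw [hkx]; exact_mod_cast hk2
        have := h2 hx2
        nlinarith
    have hint_g : Integrable g μ := integrable_condExp
    have hint_rhs : Integrable (fun ω => δ * (X t ω - 1) + 1) μ :=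
      (((hint t).sub (integrable_const 1)).const_mul δ).add (integrable_const 1)
    have h3 : ∫ ω, g ω ∂μ ≤ ∫ ω, (δ * (X t ω - 1) + 1) ∂μ :=
      integral_mono_ae hint_g hint_rhs hbound
    have h4 : ∫ ω, g ω ∂μ = ∫ ω, X (t+1) ω ∂μ := integral_condExp (ℱ.le t)
    have h5 : ∫ ω, (δ * (X t ω - 1) + 1) ∂μ = δ * (∫ ω, X t ω ∂μ - 1) + 1 := by
      have i1 : Integrable (fun ω => δ * (X t ω - 1)) μ := by
        exact ((hint t).sub (integrable_const 1)).const_mul δ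
      have e1 : ∫ ω, (X t ω - 1) ∂μ = ∫ ω, X t ω ∂μ - 1 := by
        rw [integral_sub (hint t) (integrable_const 1)]
        simp
      rw [integral_add i1 (integrable_const 1), integral_const_mul, e1]
      simp
    rw [h4, h5] at h3
    linarith
  have hE : ∀ t, ∫ ω, X t ω ∂μ - 1 ≤ δ ^ t * (n - 1) := by
    intro t
    induction t with
    | zero =>
      have := integral_mono_ae (hint 0) (integrable_const n) h0
      simp only [integral_const, probReal_univ, smul_eq_mul, one_mul] at this
      simpa using by linarith
    | succ t ih =>
      calc ∫ ω, X (t+1) ω ∂μ - 1 ≤ δ * (∫ ω, X t ω ∂μ - 1) := key t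
        _ ≤ δ * (δ ^ t * (n - 1)) := mul_le_mul_of_nonneg_left ih hδ0.le
        _ = δ ^ (t+1) * (n - 1) := by ring
  intro t
  have hnn : 0 ≤ᵐ[μ] fun ω => X t ω - 1 := by
    filter_upwards [hposint t] with ω h
    obtain ⟨k, hk, hkx⟩ := h
    have : (1:ℝ) ≤ X t ω := by rw [hkx]; exact_mod_cast hk
    simpa using this
  have hMarkov := mul_meas_ge_le_integral_of_nonneg hnn ((hint t).sub (integrable_const 1)) 1
  have hset : {x | (1:ℝ) ≤ (fun ω => X t ω - 1) x} = {ω | 2 ≤ X t ω} := by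
    ext ω; simp only [Set.mem_setOf_eq]; constructor <;> intro h <;> linarith
  have hintsub : ∫ ω, (X t ω - 1) ∂μ = ∫ ω, X t ω ∂μ - 1 := by
    rw [integral_sub (hint t) (integrable_const 1)]; simp
  rw [hset, one_mul] at hMarkov
  have hmeas : (μ {ω | 2 ≤ X t ω}).toReal ≤ δ ^ t * (n - 1) := by
    calc (μ {ω | 2 ≤ X t ω}).toReal ≤ ∫ ω, (X t ω - 1) ∂μ := hMarkov
      _ = ∫ ω, X t ω ∂μ - 1 := hintsub
      _ ≤ δ ^ t * (n - 1) := hE t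
  calc μ {ω | 2 ≤ X t ω} = ENNReal.ofReal ((μ {ω | 2 ≤ X t ω}).toReal) :=
        (ENNReal.ofReal_toReal (measure_ne_top μ _)).symm
    _ ≤ ENNReal.ofReal (δ ^ t * (n - 1)) := ENNReal.ofReal_le_ofReal hmeas
    _ ≤ ENNReal.ofReal (δ ^ t * n) := by
        apply ENNReal.ofReal_le_ofReal
        have : (0:ℝ) ≤ δ ^ t := pow_nonneg hδ0.le t
        nlinarith
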